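/- Let μ be a partition of n. For every N ≥ 1, C_μ(x_1,…,x_N;q,t) = Σ_ξ q^{inv(ξ)} t^{maj(ξ)} Q_{n,D(ξ)}(x_1,…,x_N), where the sum is over all standard fillings ξ (bijections ξ : dg(μ) → {1,…,n}), and D(ξ) = {i ∈ {1,…,n−1} : ξ^{-1}(i+1) precedes ξ^{-1}(i) in the reading order}. -/

import Mathlib

open Finset MvPolynomial

namespace HHL

/-! ### Diagrams, fillings and the statistics `inv` and `maj` -/

/-- The cells of the Young diagram of the partition `μ` (given as the list of
its row lengths `μ_1, μ_2, …`); the cell `(i,j)` lies in row `i` (from the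
bottom, French style) and column `j`, with `1 ≤ i ≤ ℓ(μ)`, `1 ≤ j ≤ μ_i`. -/
def cells (μ : List ℕ) : Finset (ℕ × ℕ) :=
  (Finset.Icc 1 μ.length ×ˢ Finset.Icc 1 (μ.foldr max 0)).filter
    (fun u => u.2 ≤ μ.getD (u.1 - 1) 0)

/-- `μ` is a partition: a weakly decreasing list of positive integers. -/
def IsPartitionList (μ : List ℕ) : Prop := μ.Pairwise (· ≥ ·) ∧ ∀ x ∈ μ, 0 < x

/-- The arm of a cell: the number of cells strictly to its right in its row. -/
def arm (μ : List ℕ) (u : ℕ × ℕ) : ℕ :=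
  ((cells μ).filter (fun v => v.1 = u.1 ∧ u.2 < v.2)).card

/-- The leg of a cell: the number of cells strictly above it in its column. -/
def leg (μ : List ℕ) (u : ℕ × ℕ) : ℕ :=
  ((cells μ).filter (fun v => v.2 = u.2 ∧ u.1 < v.1)).card

/-- `u` precedes `v` in the reading order (row by row from the top row down,
left to right within each row). -/
def ReadBefore (u v : ℕ × ℕ) : Prop := v.1 < u.1 ∨ (u.1 = v.1 ∧ u.2 < v.2)

instance (u v : ℕ × ℕ) : Decidable (ReadBefore u v) := by
  unfold ReadBefore; infer_instance

/-- `u` and `v` attack each other and `u` precedes `v` in reading order: either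
they are in the same row with `u` to the left, or `u` is one row above `v` and
strictly to its right. -/
def AttackOrd (u v : ℕ × ℕ) : Prop :=
  (u.1 = v.1 ∧ u.2 < v.2) ∨ (u.1 = v.1 + 1 ∧ v.2 < u.2)

instance (u v : ℕ × ℕ) : Decidable (AttackOrd u v) := by
  unfold AttackOrd; infer_instance

/-- `u` and `v` attack each other. -/
def Attack (u v : ℕ × ℕ) : Prop := AttackOrd u v ∨ AttackOrd v u

instance (u v : ℕ × ℕ) : Decidable (Attack u v) := by
  unfold Attack; infer_instance

section Stats

variable {V : Type} (μ : List ℕ) (Ind : V → V → Prop) [DecidableRel Ind] (σ : ℕ × ℕ → V)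

/-- The set `Inv(σ)` of inversions of a filling `σ`, recorded as ordered pairs
`(u,v)` with `u` attacking `v`, `u` preceding `v` in reading order, and
`I(σ(u),σ(v)) = 1`; here `Ind x y` means `I(x,y) = 1` (for ordinary fillings
`Ind x y ↔ x > y`). -/
def invPairs : Finset ((ℕ × ℕ) × (ℕ × ℕ)) :=
  ((cells μ) ×ˢ (cells μ)).filter fun p => AttackOrd p.1 p.2 ∧ Ind (σ p.1) (σ p.2)

/-- The descent set `Des(σ)`: cells `u = (i+1,j)` with `v = (i,j) ∈ dg(μ)` and
`I(σ(u),σ(v)) = 1`. -/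
def desCells : Finset (ℕ × ℕ) :=
  (cells μ).filter fun u => (u.1 - 1, u.2) ∈ cells μ ∧ Ind (σ u) (σ (u.1 - 1, u.2))

/-- `maj(σ) = Σ_{u ∈ Des(σ)} (leg(u) + 1)`. -/
def majStat : ℕ := ∑ u ∈ desCells μ Ind σ, (leg μ u + 1)

/-- `inv(σ) = |Inv(σ)| − Σ_{u ∈ Des(σ)} arm(u)`. -/
def invStat : ℕ := (invPairs μ Ind σ).card - ∑ u ∈ desCells μ Ind σ, arm μ u

end Stats

/-- For ordinary (positive-integer valued) fillings, `I(x,y) = 1` iff `x > y`. -/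
def natInd : ℕ → ℕ → Prop := fun x y => y < x

instance : DecidableRel natInd := fun _ _ => by unfold natInd; infer_instance

/-- Extend a function defined on the cells of `μ` to a total function. -/
def extendF {V : Type} (μ : List ℕ) (d : V) (f : {u // u ∈ cells μ} → V) : ℕ × ℕ → V :=
  fun u => if h : u ∈ cells μ then f ⟨u, h⟩ else d

/-- A filling of `dg(μ)` with entries in `{1, …, N}`, encoded by a function to
`Fin N` (value `k` means the entry `k + 1`), as a total function `ℕ × ℕ → ℕ`. -/
def natFill (μ : List ℕ) {N : ℕ} (f : {u // u ∈ cells μ} → Fin N) : ℕ × ℕ → ℕ :=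
  extendF μ 0 fun u => (f u).val + 1

/-- Haglund's combinatorial formula
`C_μ(x_1,…,x_N;q,t) = Σ_σ q^{inv(σ)} t^{maj(σ)} x^σ`, a polynomial in
`x_1,…,x_N` with coefficients in `ℤ[q,t]`, where `q = C (X 0)`, `t = C (X 1)`. -/
noncomputable def Cmu (μ : List ℕ) (N : ℕ) :
    MvPolynomial (Fin N) (MvPolynomial (Fin 2) ℤ) :=
  ∑ f : {u // u ∈ cells μ} → Fin N,
    C ((X 0 : MvPolynomial (Fin 2) ℤ) ^ invStat μ natInd (natFill μ f) *
       (X 1 : MvPolynomial (Fin 2) ℤ) ^ majStat μ natInd (natFill μ f)) *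
    ∏ u, X (f u)

/-! ### Skew diagrams and LLT polynomials -/

/-- A pair of partitions `(λ, μ)` with `μ ⊆ λ`, representing the skew diagram
`λ∖μ`. -/
def IsSkewPair (p : List ℕ × List ℕ) : Prop :=
  IsPartitionList p.1 ∧ IsPartitionList p.2 ∧ ∀ i, p.2.getD i 0 ≤ p.1.getD i 0

/-- The cells of the skew diagram `λ∖μ`. -/
def skewCells (p : List ℕ × List ℕ) : Finset (ℕ × ℕ) := cells p.1 \ cells p.2

/-- The content `c(u) = i − j` of the cell `u = (i,j)`. -/
def content (u : ℕ × ℕ) : ℤ := (u.1 : ℤ) - (u.2 : ℤ)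

/-- The disjoint union of the cells of a tuple of skew diagrams. -/
abbrev TDom {k : ℕ} (ν : Fin k → List ℕ × List ℕ) : Type :=
  Σ i : Fin k, {u // u ∈ skewCells (ν i)}

/-- `f` (with `f ⟨i,u⟩` the entry of the `i`-th tableau at the cell `u`) is a
tuple of semistandard Young tableaux: entries weakly increasing along each row
and strictly increasing up each column. -/
def IsSSYTtuple {k : ℕ} (ν : Fin k → List ℕ × List ℕ) (f : TDom ν → ℕ) : Prop :=
  ∀ i : Fin k, ∀ u v : {u // u ∈ skewCells (ν i)},
    (u.1.1 = v.1.1 ∧ u.1.2 ≤ v.1.2 → f ⟨i, u⟩ ≤ f ⟨i, v⟩) ∧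
    (u.1.2 = v.1.2 ∧ u.1.1 < v.1.1 → f ⟨i, u⟩ < f ⟨i, v⟩)

instance {k : ℕ} (ν : Fin k → List ℕ × List ℕ) (f : TDom ν → ℕ) :
    Decidable (IsSSYTtuple ν f) := by unfold IsSSYTtuple; infer_instance

/-- The number of inversions of a tuple of tableaux: pairs of entries
`T^(i)(u) > T^(j)(v)` with either `i < j` and `c(u) = c(v)`, or `i > j` and
`c(u) = c(v) + 1`. -/
def lltInv {k : ℕ} (ν : Fin k → List ℕ × List ℕ) (f : TDom ν → ℕ) : ℕ :=
  (Finset.univ.filter fun p : TDom ν × TDom ν =>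
    ((p.1.1 < p.2.1 ∧ content p.1.2.1 = content p.2.2.1) ∨
     (p.2.1 < p.1.1 ∧ content p.1.2.1 = content p.2.2.1 + 1)) ∧
    f p.2 < f p.1).card

/-- The LLT polynomial `G_ν(x_1,…,x_N;q) = Σ_T q^{inv(T)} x^T` in `N`
variables, with coefficients in `ℤ[q]` (`q = C Polynomial.X`); tableau entries
in `{1,…,N}` are encoded by `Fin N` (value `k` means entry `k + 1`). -/
noncomputable def llt {k : ℕ} (ν : Fin k → List ℕ × List ℕ) (N : ℕ) :
    MvPolynomial (Fin N) (Polynomial ℤ) :=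
  ∑ f ∈ Finset.univ.filter (fun f : TDom ν → Fin N =>
      IsSSYTtuple ν (fun a => (f a).val + 1)),
    C (Polynomial.X ^ lltInv ν (fun a => (f a).val + 1)) * ∏ a, X (f a)

/-! ### The super alphabet -/

/-- The super alphabet `A = {1, 1̄, 2, 2̄, …}`: the letter `(a, b)` has absolute
value `a + 1` and is negative (barred) iff `b = true`. -/
abbrev SLetter : Type := ℕ × Bool

/-- The absolute value of a super letter. -/
def sAbs (x : SLetter) : ℕ := x.1 + 1

/-- The ordering `<₁`: `1 < 1̄ < 2 < 2̄ < ⋯`. -/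
def lt1 (x y : SLetter) : Prop :=
  x.1 < y.1 ∨ (x.1 = y.1 ∧ x.2 = false ∧ y.2 = true)

instance : DecidableRel lt1 := fun _ _ => by unfold lt1; infer_instance

/-- The ordering `<₂`: `1 < 2 < 3 < ⋯ < 3̄ < 2̄ < 1̄`. -/
def lt2 (x y : SLetter) : Prop :=
  (x.2 = false ∧ y.2 = false ∧ x.1 < y.1) ∨ (x.2 = false ∧ y.2 = true) ∨
    (x.2 = true ∧ y.2 = true ∧ y.1 < x.1)

instance : DecidableRel lt2 := fun _ _ => by unfold lt2; infer_instance

/-- Given a total order `lt` on the super alphabet, `IndOf lt x y` holds iff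
`I(x,y) = 1`, i.e. `x > y`, or `x = y` is a negative letter. -/
def IndOf (lt : SLetter → SLetter → Prop) (x y : SLetter) : Prop :=
  lt y x ∨ (x = y ∧ x.2 = true)

instance (lt : SLetter → SLetter → Prop) [DecidableRel lt] : DecidableRel (IndOf lt) :=
  fun _ _ => by unfold IndOf; infer_instance

/-- A super filling of `dg(μ)` with letters of absolute value at most `N`, as a
total function (the value `(a, b)` with `a : Fin N` means the letter of
absolute value `a + 1`, barred iff `b`). -/
def superFill (μ : List ℕ) {N : ℕ} (f : {u // u ∈ cells μ} → Fin N × Bool) :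
    ℕ × ℕ → SLetter :=
  extendF μ (0, false) fun u => ((f u).1.val, (f u).2)

/-- A super filling with entries in `{1, 1̄}` (`f u = true` means entry `1̄`). -/
def boolFill (μ : List ℕ) (f : {u // u ∈ cells μ} → Bool) : ℕ × ℕ → SLetter :=
  extendF μ (0, false) fun u => ((0 : ℕ), f u)

/-- `m(σ)`: the number of negative entries of a super filling. -/
def negCount (μ : List ℕ) (σ : ℕ × ℕ → SLetter) : ℕ :=
  ((cells μ).filter fun u => (σ u).2 = true).card

/-- `p(σ)`: the number of positive entries of a super filling. -/
def posCount (μ : List ℕ) (σ : ℕ × ℕ → SLetter) : ℕ :=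
  ((cells μ).filter fun u => (σ u).2 = false).card

/-- A super filling is non-attacking if entries in attacking cells have
distinct absolute values. -/
def NonAttacking (μ : List ℕ) (σ : ℕ × ℕ → SLetter) : Prop :=
  ∀ u ∈ cells μ, ∀ v ∈ cells μ, Attack u v → sAbs (σ u) ≠ sAbs (σ v)

instance (μ : List ℕ) (σ : ℕ × ℕ → SLetter) : Decidable (NonAttacking μ σ) := by
  unfold NonAttacking; infer_instance

/-! ### Conjugate partitions, ribbons, connectivity -/

/-- `conj μ j = μ'_j`, the number of rows of `μ` of length at least `j`. -/
def conj (μ : List ℕ) (j : ℕ) : ℕ :=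
  ((Finset.range μ.length).filter fun i => j ≤ μ.getD i 0).card

/-- The transpose `μ'` of a partition, as a list. -/
def conjList (μ : List ℕ) : List ℕ :=
  (List.range (μ.foldr max 0)).map fun j => conj μ (j + 1)

/-- Transpose of a skew shape: `λ∖μ ↦ λ'∖μ'`. -/
def transposePair (p : List ℕ × List ℕ) : List ℕ × List ℕ :=
  (conjList p.1, conjList p.2)

/-- Two cells are adjacent (share an edge). -/
def AdjCell (u v : ℕ × ℕ) : Prop :=
  (u.1 = v.1 ∧ (u.2 = v.2 + 1 ∨ v.2 = u.2 + 1)) ∨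
  (u.2 = v.2 ∧ (u.1 = v.1 + 1 ∨ v.1 = u.1 + 1))

/-- A set of cells is connected (any two cells are joined by a path of
edge-adjacent cells inside the set). -/
def ConnSet (s : Finset (ℕ × ℕ)) : Prop :=
  ∀ u ∈ s, ∀ v ∈ s, Relation.ReflTransGen (fun a b => a ∈ s ∧ b ∈ s ∧ AdjCell a b) u v

/-- A set of cells contains no 2×2 block. -/
def No2x2 (s : Finset (ℕ × ℕ)) : Prop :=
  ¬ ∃ i j, (i, j) ∈ s ∧ (i + 1, j) ∈ s ∧ (i, j + 1) ∈ s ∧ (i + 1, j + 1) ∈ s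

/-! ### Reading words and cocharge -/

/-- Boolean comparison realizing the reading order. -/
def readLe (u v : ℕ × ℕ) : Bool :=
  decide (v.1 < u.1) || (decide (u.1 = v.1) && decide (u.2 ≤ v.2))

/-- The reading word of a filling `σ` of `dg(μ)`: its entries listed in reading
order. -/
noncomputable def readingWord (μ : List ℕ) (σ : ℕ × ℕ → ℕ) : List ℕ :=
  ((cells μ).toList.mergeSort readLe).map σ

/-- Boolean comparison for the cocharge-word ordering of the cells: entries of
`σ` decreasing and, within constant segments of `σ`, cells in decreasing
reading order. -/
def cwordLe (σ : ℕ × ℕ → ℕ) (u v : ℕ × ℕ) : Bool :=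
  decide (σ v < σ u) ||
    (decide (σ u = σ v) &&
      (decide (u.1 < v.1) || (decide (u.1 = v.1) && decide (v.2 ≤ u.2))))

/-- The cocharge word of a filling: the row indices of the cells, listed so that
the entries are decreasing, with ties broken by decreasing reading order. -/
noncomputable def cword (μ : List ℕ) (σ : ℕ × ℕ → ℕ) : List ℕ :=
  ((cells μ).toList.mergeSort (cwordLe σ)).map Prod.fst

/-- Cocharge of a word that is a permutation of `{1,…,n}`:
`Σ_{i ∈ D(w⁻¹)} (n − i)`, where `i ∈ D(w⁻¹)` iff `i + 1` occurs before `i`. -/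
def cochargePerm (w : List ℕ) : ℕ :=
  ∑ i ∈ Finset.Icc 1 (w.length - 1),
    if w.idxOf (i + 1) < w.idxOf i then w.length - i else 0

/-- The (0-based) positions of the letter `a` in `w`. -/
def letterPositions (w : List ℕ) (a : ℕ) : Finset ℕ :=
  (Finset.range w.length).filter fun k => w.getD k 0 = a

/-- The position `k_i` for the letter `a`: the rightmost occurrence of `a`
strictly to the left of `bound` if there is one, otherwise the rightmost
occurrence of `a`. -/
def choosePos (w : List ℕ) (a : ℕ) (bound : Option ℕ) : Option ℕ :=
  match bound with
  | none => (letterPositions w a).max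
  | some b =>
      let s := (letterPositions w a).filter (· < b)
      if s.Nonempty then s.max else (letterPositions w a).max

/-- `posListAux w i = [k_i, k_{i-1}, …, k_1]` (as options). -/
def posListAux (w : List ℕ) : ℕ → List (Option ℕ)
  | 0 => []
  | i + 1 =>
      let rest := posListAux w i
      choosePos w (i + 1) (rest.headD none) :: rest

/-- The set `S = {k_1, …, k_l}` of positions extracted in the cocharge
recursion, where `l` is the largest letter of `w`. -/
def extractSet (w : List ℕ) : Finset ℕ :=
  ((posListAux w (w.foldr max 0)).filterMap id).toFinset

/-- The subword of `w` at the positions in `S` (in increasing position order). -/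
def subwordOn (w : List ℕ) (S : Finset ℕ) : List ℕ :=
  ((List.range w.length).filter fun k => decide (k ∈ S)).map fun k => w.getD k 0

/-- The subword of `w` at the positions *not* in `S`. -/
def subwordOff (w : List ℕ) (S : Finset ℕ) : List ℕ :=
  ((List.range w.length).filter fun k => decide (k ∉ S)).map fun k => w.getD k 0

/-- Fuelled cocharge recursion: `cocharge w = cocharge y + cocharge z`, where
`y` is the extracted subword (a permutation of `{1,…,l}`) and `z` is the
complementary subword. -/
def cochargeAux : ℕ → List ℕ → ℕ
  | 0, _ => 0
  | fuel + 1, w =>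
      let S := extractSet w
      let z := subwordOff w S
      if z.length < w.length then cochargePerm (subwordOn w S) + cochargeAux fuel z
      else cochargePerm (subwordOn w S)

/-- The cocharge of a word of partition content. -/
def cocharge (w : List ℕ) : ℕ := cochargeAux w.length w

/-! ### Yamanouchi words and crystal operators -/

/-- A word is Yamanouchi if every final segment contains at least as many
letters `i` as letters `i + 1`, for every `i ≥ 1`. -/
def IsYamanouchi (w : List ℕ) : Prop :=
  ∀ k i, ((w.drop k).count (i + 2)) ≤ ((w.drop k).count (i + 1))

noncomputable instance : DecidablePred IsYamanouchi := fun _ => Classical.propDecidable _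

/-- The letters `i` (close, `false`) and `i + 1` (open, `true`) of `w`, as a
list of (position, is-open) tokens in position order. -/
def tokens (i : ℕ) (w : List ℕ) : List (ℕ × Bool) :=
  (List.range w.length).filterMap fun k =>
    if w.getD k 0 = i + 1 then some (k, true)
    else if w.getD k 0 = i then some (k, false) else none

/-- Stack pass performing the repeated deletion of adjacent matched pairs (an
`i + 1` immediately followed by an `i` in the current subword). The first
argument is the (reversed) list of surviving tokens so far. -/
def reduceTokens : List (ℕ × Bool) → List (ℕ × Bool) → List (ℕ × Bool)
  | acc, [] => acc.reverse
  | a :: acc', t :: rest =>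
      if a.2 ∧ ¬ t.2 then reduceTokens acc' rest
      else reduceTokens (t :: a :: acc') rest
  | [], t :: rest => reduceTokens [t] rest

/-- The surviving letters of `{i, i + 1}` in `w` after matched-pair deletion. -/
def survivors (i : ℕ) (w : List ℕ) : List (ℕ × Bool) := reduceTokens [] (tokens i w)

/-- The crystal raising operator `E_i` on words: change the first surviving
(unmatched) letter `i + 1` to `i`; `none` encodes `E_i w = 0`. -/
def crystalE (i : ℕ) (w : List ℕ) : Option (List ℕ) :=
  match (survivors i w).find? (fun t => t.2) with
  | none => none
  | some t => some (w.set t.1 i)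

/-! ### Straight-shape tableaux and Schur polynomials -/

/-- Semistandard tableau condition for a filling of the cells of `lam`. -/
def IsSSYTcells (lam : List ℕ) (T : {u // u ∈ cells lam} → ℕ) : Prop :=
  ∀ u v : {u // u ∈ cells lam},
    (u.1.1 = v.1.1 ∧ u.1.2 ≤ v.1.2 → T u ≤ T v) ∧
    (u.1.2 = v.1.2 ∧ u.1.1 < v.1.1 → T u < T v)

instance (lam : List ℕ) (T : {u // u ∈ cells lam} → ℕ) :
    Decidable (IsSSYTcells lam T) := by unfold IsSSYTcells; infer_instance

/-- The Schur polynomial `s_λ(x_1,…,x_N) = Σ_{T ∈ SSYT(λ), entries ≤ N} x^T`,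
with coefficients in a commutative ring `R`. -/
noncomputable def schurPoly (R : Type) [CommRing R] (lam : List ℕ) (N : ℕ) :
    MvPolynomial (Fin N) R :=
  ∑ T ∈ Finset.univ.filter (fun T : {u // u ∈ cells lam} → Fin N =>
      IsSSYTcells lam (fun u => (T u).val + 1)),
    ∏ u, X (T u)

/-- The decreasing list of parts of `p : Nat.Partition n`. -/
def partnList {n : ℕ} (p : n.Partition) : List ℕ :=
  (Multiset.sort p.parts (· ≤ ·)).reverse


/-- Gessel's quasisymmetric function `Q_{n,D}(x_1,…,x_N)`: the sum of
`x_{a_1} ⋯ x_{a_n}` over weakly increasing sequences `1 ≤ a_1 ≤ ⋯ ≤ a_n ≤ N`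
with `a_i = a_{i+1} ⟹ i ∉ D` (entries encoded by `Fin N`, value `k` meaning
`k + 1`). -/
noncomputable def gesselQ (R : Type) [CommRing R] (n N : ℕ) (D : Finset ℕ) :
    MvPolynomial (Fin N) R :=
  ∑ a ∈ Finset.univ.filter (fun a : Fin n → Fin N =>
      (∀ i j : Fin n, i ≤ j → a i ≤ a j) ∧
      ∀ i : Fin n, ∀ h : i.val + 1 < n, a i = a ⟨i.val + 1, h⟩ → (i.val + 1) ∉ D),
    ∏ i, X (a i)

/-- The descent set `D(ξ) ⊆ {1,…,n−1}` of a standard filling `ξ` of `dg(μ)`: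
those `i` such that `ξ⁻¹(i+1)` precedes `ξ⁻¹(i)` in the reading order. -/
def stdDes (μ : List ℕ) (σ : ℕ × ℕ → ℕ) : Finset ℕ :=
  (Finset.Icc 1 (μ.sum - 1)).filter fun i =>
    ∃ u ∈ cells μ, ∃ v ∈ cells μ, σ u = i + 1 ∧ σ v = i ∧ ReadBefore u v

/-! ### Auxiliary lemmas for standardization -/

section AuxStd

variable {μ : List ℕ} {N n : ℕ}

private lemma le_foldr_max {x : ℕ} {l : List ℕ} (hx : x ∈ l) : x ≤ l.foldr max 0 := by
  induction l with
  | nil => cases hx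
  | cons a l ih =>
    rcases List.mem_cons.mp hx with h | h
    · simp [h]
    · exact le_trans (ih h) (le_max_right _ _)

lemma mem_cells_iff {u : ℕ × ℕ} :
    u ∈ cells μ ↔ 1 ≤ u.1 ∧ u.1 ≤ μ.length ∧ 1 ≤ u.2 ∧ u.2 ≤ μ.getD (u.1 - 1) 0 := by
  unfold cells
  simp only [Finset.mem_filter, Finset.mem_product, Finset.mem_Icc]
  constructor
  · rintro ⟨⟨⟨h1, h2⟩, h3, _⟩, h5⟩; exact ⟨h1, h2, h3, h5⟩
  · rintro ⟨h1, h2, h3, h5⟩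
    refine ⟨⟨⟨h1, h2⟩, h3, le_trans h5 ?_⟩, h5⟩
    have hlt : u.1 - 1 < μ.length := by omega
    rw [List.getD_eq_getElem μ 0 hlt]
    exact le_foldr_max (List.getElem_mem _)

private lemma sum_getD (l : List ℕ) : ∑ i ∈ Finset.range l.length, l.getD i 0 = l.sum := by
  induction l with
  | nil => simp
  | cons a l ih =>
    rw [List.length_cons, Finset.sum_range_succ']
    simp only [List.getD_cons_succ, List.getD_cons_zero, List.sum_cons, ih]
    ring

lemma card_cells : (cells μ).card = μ.sum := by
  have hrw : cells μ = (Finset.Icc 1 μ.length).biUnion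
      (fun i => ({i} : Finset ℕ) ×ˢ Finset.Icc 1 (μ.getD (i - 1) 0)) := by
    ext u
    simp only [mem_cells_iff, Finset.mem_biUnion, Finset.mem_Icc, Finset.mem_product,
      Finset.mem_singleton]
    constructor
    · rintro ⟨h1, h2, h3, h4⟩; exact ⟨u.1, ⟨h1, h2⟩, rfl, h3, h4⟩
    · rintro ⟨i, ⟨h1, h2⟩, rfl, h3, h4⟩; exact ⟨h1, h2, h3, h4⟩
  rw [hrw, Finset.card_biUnion]
  · have : ∀ i ∈ Finset.Icc 1 μ.length,
        (({i} : Finset ℕ) ×ˢ Finset.Icc 1 (μ.getD (i - 1) 0)).card = μ.getD (i - 1) 0 := by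
      intro i _
      rw [Finset.card_product, Finset.card_singleton, Nat.card_Icc]
      omega
    rw [Finset.sum_congr rfl this]
    rw [← sum_getD μ]
    apply Finset.sum_nbij' (fun x => x - 1) (fun x => x + 1)
    · intro a ha; simp only [Finset.mem_Icc] at ha; simp only [Finset.mem_range]; omega
    · intro a ha; simp only [Finset.mem_range] at ha; simp only [Finset.mem_Icc]; omega
    · intro a ha; simp only [Finset.mem_Icc] at ha; omega
    · intro a _; omega
    · intro a _; rfl
  · intro i _ j _ hij
    simp only [Finset.disjoint_left, Finset.mem_product, Finset.mem_singleton]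
    rintro u ⟨rfl, -⟩ ⟨rfl, -⟩
    exact hij rfl

lemma readBefore_trans {u v w : ℕ × ℕ} : ReadBefore u v → ReadBefore v w → ReadBefore u w := by
  unfold ReadBefore; omega

lemma readBefore_irrefl (u : ℕ × ℕ) : ¬ ReadBefore u u := by unfold ReadBefore; omega

lemma readBefore_asymm {u v : ℕ × ℕ} : ReadBefore u v → ¬ ReadBefore v u := by
  unfold ReadBefore; omega

lemma readBefore_total {u v : ℕ × ℕ} (h : u ≠ v) : ReadBefore u v ∨ ReadBefore v u := by
  have h' : u.1 ≠ v.1 ∨ u.2 ≠ v.2 := by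
    by_contra hc; push_neg at hc; exact h (Prod.ext hc.1 hc.2)
  unfold ReadBefore; omega

lemma attackOrd_readBefore {u v : ℕ × ℕ} (h : AttackOrd u v) : ReadBefore u v := by
  unfold AttackOrd at h; unfold ReadBefore; omega

/-- Strict order on cells: by value, ties broken by reading order. -/
def lessF (g : {u // u ∈ cells μ} → Fin N) (u v : {u // u ∈ cells μ}) : Prop :=
  g u < g v ∨ (g u = g v ∧ ReadBefore u.1 v.1)

instance (g : {u // u ∈ cells μ} → Fin N) (u v : {u // u ∈ cells μ}) :
    Decidable (lessF g u v) := by unfold lessF; infer_instance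

lemma lessF_irrefl (g : {u // u ∈ cells μ} → Fin N) (u : {u // u ∈ cells μ}) :
    ¬ lessF g u u := by
  rintro (h | ⟨-, h⟩)
  · exact lt_irrefl _ h
  · exact readBefore_irrefl _ h

lemma lessF_trans {g : {u // u ∈ cells μ} → Fin N} {u v w : {u // u ∈ cells μ}} :
    lessF g u v → lessF g v w → lessF g u w := by
  rintro (h1 | ⟨h1, h1'⟩) (h2 | ⟨h2, h2'⟩)
  · exact Or.inl (lt_trans h1 h2)
  · exact Or.inl (h2 ▸ h1)
  · exact Or.inl (h1 ▸ h2)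
  · exact Or.inr ⟨h1.trans h2, readBefore_trans h1' h2'⟩

lemma lessF_trichotomy (g : {u // u ∈ cells μ} → Fin N) (u v : {u // u ∈ cells μ}) :
    lessF g u v ∨ u = v ∨ lessF g v u := by
  rcases lt_trichotomy (g u) (g v) with h | h | h
  · exact Or.inl (Or.inl h)
  · by_cases huv : u = v
    · exact Or.inr (Or.inl huv)
    · rcases readBefore_total (fun hc : u.1 = v.1 => huv (Subtype.ext hc)) with h' | h'
      · exact Or.inl (Or.inr ⟨h, h'⟩)
      · exact Or.inr (Or.inr (Or.inr ⟨h.symm, h'⟩))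
  · exact Or.inr (Or.inr (Or.inl h))

/-- The rank of a cell in the standardization order. -/
def rk (g : {u // u ∈ cells μ} → Fin N) (u : {u // u ∈ cells μ}) : ℕ :=
  (Finset.univ.filter fun v => lessF g v u).card

lemma rk_lt_rk_of {g : {u // u ∈ cells μ} → Fin N} {u v : {u // u ∈ cells μ}}
    (h : lessF g u v) : rk g u < rk g v := by
  apply Finset.card_lt_card
  have hsub : (Finset.univ.filter fun w => lessF g w u) ⊆
      (Finset.univ.filter fun w => lessF g w v) := by
    intro w hw
    simp only [Finset.mem_filter, Finset.mem_univ, true_and] at hw ⊢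
    exact lessF_trans hw h
  refine (Finset.ssubset_iff_of_subset hsub).mpr ⟨u, ?_, ?_⟩
  · simp only [Finset.mem_filter, Finset.mem_univ, true_and]; exact h
  · simp only [Finset.mem_filter, Finset.mem_univ, true_and]; exact lessF_irrefl g u

lemma rk_lt_rk_iff {g : {u // u ∈ cells μ} → Fin N} {u v : {u // u ∈ cells μ}} :
    rk g u < rk g v ↔ lessF g u v := by
  refine ⟨fun h => ?_, rk_lt_rk_of⟩
  rcases lessF_trichotomy g u v with h' | rfl | h'
  · exact h'
  · exact absurd h (lt_irrefl _)
  · exact absurd (lt_trans h (rk_lt_rk_of h')) (lt_irrefl _)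

lemma rk_injective (g : {u // u ∈ cells μ} → Fin N) : Function.Injective (rk g) := by
  intro u v h
  rcases lessF_trichotomy g u v with h' | h' | h'
  · exact absurd (h ▸ rk_lt_rk_of h') (lt_irrefl _)
  · exact h'
  · exact absurd (h ▸ rk_lt_rk_of h') (lt_irrefl _)

lemma rk_lt_card (g : {u // u ∈ cells μ} → Fin N) (u : {u // u ∈ cells μ}) :
    rk g u < (cells μ).card := by
  have h1 : (Finset.univ.filter fun v => lessF g v u) ⊆ Finset.univ.erase u := by
    intro w hw
    simp only [Finset.mem_filter, Finset.mem_univ, true_and] at hw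
    refine Finset.mem_erase.mpr ⟨fun hc => ?_, Finset.mem_univ _⟩
    exact lessF_irrefl g u (hc ▸ hw)
  have h2 := Finset.card_le_card h1
  rw [Finset.card_erase_of_mem (Finset.mem_univ u), Finset.card_univ, Fintype.card_coe] at h2
  have h3 : 0 < (cells μ).card := Finset.card_pos.mpr ⟨u.1, u.2⟩
  unfold rk
  omega

/-- Standardization of a filling. -/
def stdz (h : (cells μ).card = n) (g : {u // u ∈ cells μ} → Fin N) :
    {u // u ∈ cells μ} → Fin n :=
  fun u => ⟨rk g u, h ▸ rk_lt_card g u⟩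

lemma stdz_lt_iff {h : (cells μ).card = n} {g : {u // u ∈ cells μ} → Fin N}
    {u v : {u // u ∈ cells μ}} : stdz h g u < stdz h g v ↔ lessF g u v := rk_lt_rk_iff

lemma stdz_bijective (h : (cells μ).card = n) (g : {u // u ∈ cells μ} → Fin N) :
    Function.Bijective (stdz h g) := by
  rw [Fintype.bijective_iff_injective_and_card]
  constructor
  · intro u v huv
    exact rk_injective g (congrArg Fin.val huv)
  · rw [Fintype.card_coe, Fintype.card_fin, h]

lemma natFill_coe {f : {u // u ∈ cells μ} → Fin N} (u : {u // u ∈ cells μ}) :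
    natFill μ f u.1 = (f u).val + 1 := by
  unfold natFill extendF
  rw [dif_pos u.2]

/-- Uniqueness of standardization. -/
lemma stdz_unique (h : (cells μ).card = n) (g : {u // u ∈ cells μ} → Fin N)
    (ξ : {u // u ∈ cells μ} → Fin n) (hb : Function.Bijective ξ)
    (hiff : ∀ u v, lessF g u v ↔ ξ u < ξ v) : stdz h g = ξ := by
  funext u
  apply Fin.ext
  show rk g u = (ξ u).val
  have hcard : (Finset.univ.filter fun v => lessF g v u).card
      = ((Finset.univ : Finset (Fin n)).filter (· < ξ u)).card := by
    apply Finset.card_bij' (fun v _ => ξ v)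
      (fun i _ => (Equiv.ofBijective ξ hb).symm i)
    · intro v hv
      simp only [Finset.mem_filter, Finset.mem_univ, true_and] at hv ⊢
      exact (hiff v u).mp hv
    · intro i hi
      simp only [Finset.mem_filter, Finset.mem_univ, true_and] at hi ⊢
      apply (hiff _ u).mpr
      rwa [show ξ ((Equiv.ofBijective ξ hb).symm i) = i from
        (Equiv.ofBijective ξ hb).apply_symm_apply i]
    · intro v _
      exact (Equiv.ofBijective ξ hb).symm_apply_apply v
    · intro i _
      exact (Equiv.ofBijective ξ hb).apply_symm_apply i
  rw [rk, hcard]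
  have : (Finset.univ : Finset (Fin n)).filter (· < ξ u) = Finset.Iio (ξ u) := by
    ext y; simp
  rw [this, Fin.card_Iio]

end AuxStd
section AuxStd2

variable {μ : List ℕ} {N n : ℕ}

lemma desCells_congr {σ τ : ℕ × ℕ → ℕ}
    (h : ∀ u ∈ cells μ, ∀ v ∈ cells μ, ReadBefore u v →
      (natInd (σ u) (σ v) ↔ natInd (τ u) (τ v))) :
    desCells μ natInd σ = desCells μ natInd τ := by
  unfold desCells
  apply Finset.filter_congr
  intro u hu
  by_cases hv : (u.1 - 1, u.2) ∈ cells μ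
  · have hrb : ReadBefore u (u.1 - 1, u.2) := by
      have h1 := mem_cells_iff.mp hu
      have h2 := mem_cells_iff.mp hv
      simp only at h2
      unfold ReadBefore; left; simp only; omega
    rw [h u hu _ hv hrb]
  · simp [hv]

lemma invPairs_congr {σ τ : ℕ × ℕ → ℕ}
    (h : ∀ u ∈ cells μ, ∀ v ∈ cells μ, ReadBefore u v →
      (natInd (σ u) (σ v) ↔ natInd (τ u) (τ v))) :
    invPairs μ natInd σ = invPairs μ natInd τ := by
  unfold invPairs
  apply Finset.filter_congr
  intro p hp
  rw [Finset.mem_product] at hp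
  by_cases ha : AttackOrd p.1 p.2
  · rw [h p.1 hp.1 p.2 hp.2 (attackOrd_readBefore ha)]
  · simp [ha]

/-- The key property of standardization: it preserves the comparisons used by
the statistics. -/
lemma stdz_natInd_iff (hcard : (cells μ).card = n) (g : {u // u ∈ cells μ} → Fin N) :
    ∀ u ∈ cells μ, ∀ v ∈ cells μ, ReadBefore u v →
      (natInd (natFill μ g u) (natFill μ g v) ↔
        natInd (natFill μ (stdz hcard g) u) (natFill μ (stdz hcard g) v)) := by
  intro u hu v hv hrb
  have h1 : natFill μ g u = (g ⟨u, hu⟩).val + 1 := natFill_coe ⟨u, hu⟩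
  have h2 : natFill μ g v = (g ⟨v, hv⟩).val + 1 := natFill_coe ⟨v, hv⟩
  have h3 : natFill μ (stdz hcard g) u = rk g ⟨u, hu⟩ + 1 := natFill_coe ⟨u, hu⟩
  have h4 : natFill μ (stdz hcard g) v = rk g ⟨v, hv⟩ + 1 := natFill_coe ⟨v, hv⟩
  unfold natInd
  rw [h1, h2, h3, h4]
  have : rk g ⟨v, hv⟩ < rk g ⟨u, hu⟩ ↔ (g ⟨v, hv⟩).val < (g ⟨u, hu⟩).val := by
    rw [rk_lt_rk_iff]
    constructor
    · rintro (hlt | ⟨-, hrb'⟩)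
      · exact hlt
      · exact absurd hrb' (readBefore_asymm hrb)
    · intro hlt; exact Or.inl hlt
  omega

/-- Comparisons of a filling obtained from a standard filling `ξ` and a
compatible weakly increasing sequence `a` are governed by `ξ`. -/
lemma lessF_comp_iff (hs : μ.sum = n) (ξ : {u // u ∈ cells μ} → Fin n)
    (hb : Function.Bijective ξ) (a : Fin n → Fin N)
    (hmono : ∀ i j : Fin n, i ≤ j → a i ≤ a j)
    (hcompat : ∀ i : Fin n, ∀ h : i.val + 1 < n, a i = a ⟨i.val + 1, h⟩ →
      (i.val + 1) ∉ stdDes μ (natFill μ ξ)) :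
    ∀ u v, lessF (fun w => a (ξ w)) u v ↔ ξ u < ξ v := by
  set e := Equiv.ofBijective ξ hb with he
  have heapp : ∀ w, e w = ξ w := fun w => rfl
  -- Step 1: consecutive values in a constant block are in reading order.
  have step1 : ∀ (j : Fin n) (hj : j.val + 1 < n), a j = a ⟨j.val + 1, hj⟩ →
      ReadBefore (e.symm j).1 (e.symm ⟨j.val + 1, hj⟩).1 := by
    intro j hj haj
    by_contra hno
    have hne : (e.symm j).1 ≠ (e.symm ⟨j.val + 1, hj⟩).1 := by
      intro hc
      have : e.symm j = e.symm ⟨j.val + 1, hj⟩ := Subtype.ext hc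
      have : j = ⟨j.val + 1, hj⟩ := e.symm.injective this
      have := congrArg Fin.val this
      simp at this
    rcases readBefore_total hne with h' | h'
    · exact hno h'
    · apply hcompat j hj haj
      unfold stdDes
      rw [Finset.mem_filter, Finset.mem_Icc]
      refine ⟨⟨by omega, by omega⟩, (e.symm ⟨j.val + 1, hj⟩).1, (e.symm ⟨j.val + 1, hj⟩).2,
        (e.symm j).1, (e.symm j).2, ?_, ?_, h'⟩
      · rw [natFill_coe, ← heapp, e.apply_symm_apply]
      · rw [natFill_coe, ← heapp, e.apply_symm_apply]
  -- Step 2: chained reading order along a constant block.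
  have step2 : ∀ (d : ℕ) (j k : Fin n), k.val = j.val + d + 1 → a j = a k →
      ReadBefore (e.symm j).1 (e.symm k).1 := by
    intro d
    induction d with
    | zero =>
      intro j k hk hak
      have hj : j.val + 1 < n := by have := k.isLt; omega
      have : k = ⟨j.val + 1, hj⟩ := Fin.ext (by simp only [Fin.val_mk]; omega)
      subst this
      exact step1 j hj hak
    | succ d ih =>
      intro j k hk hak
      have hj : j.val + 1 < n := by have := k.isLt; omega
      set mid : Fin n := ⟨j.val + 1, hj⟩ with hmid
      have h1 : a j = a mid := by
        refine le_antisymm (hmono j mid (by rw [Fin.le_def]; simp [hmid])) ?_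
        rw [hak]
        exact hmono mid k (by rw [Fin.le_def]; simp [hmid]; omega)
      have h2 : a mid = a k := by rw [← h1, hak]
      exact readBefore_trans (step1 j hj h1) (ih mid k (by simp [hmid]; omega) h2)
  -- Main equivalence.
  intro u v
  constructor
  · rintro (hlt | ⟨heq, hrb⟩)
    · by_contra hc
      push_neg at hc
      exact absurd hlt (not_lt.mpr (hmono _ _ hc))
    · rcases lt_trichotomy (ξ u) (ξ v) with h' | h' | h'
      · exact h'
      · exact absurd hrb ((hb.injective h' ▸ readBefore_irrefl u.1))
      · exfalso
        have := step2 (↑(ξ u) - ↑(ξ v) - 1) (ξ v) (ξ u)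
          (by have := Fin.lt_def.mp h'; omega) heq.symm
        rw [← heapp, ← heapp, e.symm_apply_apply, e.symm_apply_apply] at this
        exact readBefore_asymm hrb this
  · intro hlt
    rcases eq_or_lt_of_le (hmono _ _ (le_of_lt hlt)) with heq | h'
    · refine Or.inr ⟨heq, ?_⟩
      have := step2 (↑(ξ v) - ↑(ξ u) - 1) (ξ u) (ξ v)
        (by have := Fin.lt_def.mp hlt; omega) heq
      rwa [← heapp, ← heapp, e.symm_apply_apply, e.symm_apply_apply] at this
    · exact Or.inl h'

end AuxStd2
/-- For a partition `μ` of `n` and every `N ≥ 1`,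
`C_μ(x_1,…,x_N;q,t) = Σ_ξ q^{inv(ξ)} t^{maj(ξ)} Q_{n,D(ξ)}(x_1,…,x_N)`, the sum
being over all standard fillings `ξ : dg(μ) ≅ {1,…,n}`. -/
theorem Cmu_eq_sum_standard_gesselQ (n : ℕ) (μ : List ℕ) (hμ : IsPartitionList μ)
    (hn : μ.sum = n) (N : ℕ) (hN : 1 ≤ N) :
    Cmu μ N
      = ∑ f ∈ Finset.univ.filter
            (fun f : {u // u ∈ cells μ} → Fin n => Function.Bijective f),
          C ((X 0 : MvPolynomial (Fin 2) ℤ) ^ invStat μ natInd (natFill μ f) *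
             (X 1 : MvPolynomial (Fin 2) ℤ) ^ majStat μ natInd (natFill μ f)) *
            gesselQ (MvPolynomial (Fin 2) ℤ) n N (stdDes μ (natFill μ f)) := by
  classical
  have hcard : (cells μ).card = n := by rw [card_cells, hn]
  rw [Cmu]
  simp only [gesselQ, Finset.mul_sum]
  rw [Finset.sum_sigma']
  refine Finset.sum_nbij'
    (fun g => ⟨stdz hcard g, fun k =>
      g ((Equiv.ofBijective (stdz hcard g) (stdz_bijective hcard g)).symm k)⟩)
    (fun p => fun u => p.2 (p.1 u)) ?_ ?_ ?_ ?_ ?_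
  · -- forward membership
    intro g _
    set E := Equiv.ofBijective (stdz hcard g) (stdz_bijective hcard g) with hE
    have hEapp : ∀ w, E w = stdz hcard g w := fun _ => rfl
    rw [Finset.mem_sigma]
    constructor
    · exact Finset.mem_filter.mpr ⟨Finset.mem_univ _, stdz_bijective hcard g⟩
    · rw [Finset.mem_filter]
      refine ⟨Finset.mem_univ _, ?_, ?_⟩
      · -- monotone
        intro i j hij
        rcases eq_or_lt_of_le hij with rfl | hij
        · exact le_refl _
        · have h1 : stdz hcard g (E.symm i) < stdz hcard g (E.symm j) := by
            rw [← hEapp, ← hEapp, E.apply_symm_apply, E.apply_symm_apply]; exact hij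
          rcases stdz_lt_iff.mp h1 with h | ⟨h, -⟩
          · exact le_of_lt h
          · exact le_of_eq h
      · -- compatibility
        intro i hi heqa hmem
        unfold stdDes at hmem
        rw [Finset.mem_filter] at hmem
        obtain ⟨-, u, hu, v, hv, h1, h2, hrb⟩ := hmem
        have hu' : rk g ⟨u, hu⟩ = i.val + 1 := by
          have := natFill_coe (f := stdz hcard g) ⟨u, hu⟩
          simp only at this
          rw [this] at h1
          exact Nat.succ_injective h1
        have hv' : rk g ⟨v, hv⟩ = i.val := by
          have := natFill_coe (f := stdz hcard g) ⟨v, hv⟩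
          simp only at this
          rw [this] at h2
          exact Nat.succ_injective h2
        have hveq : (⟨v, hv⟩ : {u // u ∈ cells μ}) = E.symm i := by
          rw [Equiv.eq_symm_apply, hEapp]
          exact Fin.ext hv'
        have hueq : (⟨u, hu⟩ : {u // u ∈ cells μ}) = E.symm ⟨i.val + 1, hi⟩ := by
          rw [Equiv.eq_symm_apply, hEapp]
          exact Fin.ext hu'
        have hgeq : g ⟨v, hv⟩ = g ⟨u, hu⟩ := by rw [hveq, hueq]; exact heqa
        have hless : rk g ⟨v, hv⟩ < rk g ⟨u, hu⟩ := by rw [hu', hv']; exact Nat.lt_succ_self _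
        rcases rk_lt_rk_iff.mp hless with hlt | ⟨-, hrb'⟩
        · exact absurd hgeq (ne_of_lt hlt)
        · exact readBefore_asymm hrb hrb'
  · -- backward membership
    intro p _
    exact Finset.mem_univ _
  · -- left inverse
    intro g _
    funext u
    exact congrArg g ((Equiv.ofBijective (stdz hcard g) (stdz_bijective hcard g)).symm_apply_apply u)
  · -- right inverse
    rintro ⟨ξ, a⟩ hp
    rw [Finset.mem_sigma, Finset.mem_filter, Finset.mem_filter] at hp
    obtain ⟨⟨-, hb⟩, -, hmono, hcompat⟩ := hp
    set g : {u // u ∈ cells μ} → Fin N := fun u => a (ξ u) with hg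
    have hiff := lessF_comp_iff hn ξ hb a hmono hcompat
    have hstd : stdz hcard g = ξ := stdz_unique hcard g ξ hb hiff
    have h2 : ∀ k, g ((Equiv.ofBijective (stdz hcard g) (stdz_bijective hcard g)).symm k)
        = a k := by
      intro k
      set E := Equiv.ofBijective (stdz hcard g) (stdz_bijective hcard g) with hE
      have hk : stdz hcard g (E.symm k) = k := E.apply_symm_apply k
      have hξ : ξ (E.symm k) = k := by rw [← hstd]; exact hk
      show a (ξ (E.symm k)) = a k
      rw [hξ]
    exact Sigma.ext hstd (heq_of_eq (funext h2))
  · -- value equality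
    intro g _
    have hdes := desCells_congr (stdz_natInd_iff hcard g)
    have hinvp := invPairs_congr (stdz_natInd_iff hcard g)
    have hstat1 : invStat μ natInd (natFill μ g) = invStat μ natInd (natFill μ (stdz hcard g)) := by
      unfold invStat; rw [hdes, hinvp]
    have hstat2 : majStat μ natInd (natFill μ g) = majStat μ natInd (natFill μ (stdz hcard g)) := by
      unfold majStat; rw [hdes]
    have hprod : (∏ u, (X (g u) : MvPolynomial (Fin N) (MvPolynomial (Fin 2) ℤ)))
        = ∏ k, X (g ((Equiv.ofBijective (stdz hcard g) (stdz_bijective hcard g)).symm k)) :=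
      (Equiv.prod_comp (Equiv.ofBijective (stdz hcard g) (stdz_bijective hcard g)).symm
        (fun u => X (g u))).symm
    rw [hstat1, hstat2, hprod]

end HHL
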